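/- Let a, b, c ∈ ℂ with Re(c − a − b) > 0 and with c, c − a, c − b not nonpositive integers. For n ∈ ℕ set F(n,k) := [(a)_k (b)_k / ((c+n)_k · k!)] · Γ(c+n−a) Γ(c+n−b) / (Γ(c+n) Γ(c+n−a−b)). Then lim_{n→∞} ∑_{k=0}^∞ F(n,k) = 1. -/

import Mathlib

open Complex Filter Topology

/-- Pochhammer symbol `(a)_k = a (a+1) ⋯ (a+k-1)`. -/
noncomputable def poch (a : ℂ) (k : ℕ) : ℂ := ∏ i ∈ Finset.range k, (a + i)

/-- The normalized summand `F(n,k)` for Gauss' summation. -/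
noncomputable def Fg (a b c : ℂ) (n k : ℕ) : ℂ :=
  poch a k * poch b k / (poch (c + n) k * (Nat.factorial k : ℂ)) *
    (Complex.Gamma (c + n - a) * Complex.Gamma (c + n - b) /
      (Complex.Gamma (c + n) * Complex.Gamma (c + n - a - b)))

lemma poch_zero (s : ℂ) : poch s 0 = 1 := rfl
lemma poch_succ (s : ℂ) (k : ℕ) : poch s (k+1) = poch s k * (s + k) := Finset.prod_range_succ _ _
lemma poch_ne_zero {s : ℂ} (h : ∀ m : ℕ, s ≠ -(m:ℂ)) (k : ℕ) : poch s k ≠ 0 := by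
  rw [poch, Finset.prod_ne_zero_iff]; intro i _ h0; exact h i (by linear_combination h0)
lemma Gamma_add_nat {s : ℂ} (h : ∀ m : ℕ, s ≠ -(m:ℂ)) (n : ℕ) :
    Complex.Gamma (s + n) = poch s n * Complex.Gamma s := by
  induction n with
  | zero => simp [poch_zero]
  | succ n ih =>
    have hne : s + n ≠ 0 := fun h0 => h n (by linear_combination h0)
    have harg : s + ((n+1 : ℕ) : ℂ) = (s + n) + 1 := by push_cast; ring
    rw [harg, Complex.Gamma_add_one _ hne, ih, poch_succ]; ring
lemma gammaSeq_mul_poch {s : ℂ} (h : ∀ m : ℕ, s ≠ -(m:ℂ)) (m : ℕ) :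
    Complex.GammaSeq s m * poch s (m+1) = (m:ℂ)^s * (m.factorial : ℂ) := by
  rw [Complex.GammaSeq]; exact div_mul_cancel₀ _ (poch_ne_zero h (m+1))
lemma cpowfac_ne_zero (s : ℂ) {m : ℕ} (hm : 1 ≤ m) : (m:ℂ)^s * (m.factorial : ℂ) ≠ 0 := by
  apply mul_ne_zero
  · rw [Ne, cpow_eq_zero_iff]; rintro ⟨h0, -⟩
    exact_mod_cast absurd h0 (Nat.cast_ne_zero.mpr (by omega))
  · exact_mod_cast m.factorial_ne_zero
lemma gammaSeq_ne_zero {s : ℂ} (h : ∀ m : ℕ, s ≠ -(m:ℂ)) {m : ℕ} (hm : 1 ≤ m) :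
    Complex.GammaSeq s m ≠ 0 := by
  have h1 := gammaSeq_mul_poch h m
  intro h0; rw [h0, zero_mul] at h1
  exact cpowfac_ne_zero s hm h1.symm
lemma poch_eq {s : ℂ} (h : ∀ m : ℕ, s ≠ -(m:ℂ)) {m : ℕ} (hm : 1 ≤ m) :
    poch s (m+1) = (m:ℂ)^s * (m.factorial : ℂ) / Complex.GammaSeq s m :=
  eq_div_of_mul_eq (gammaSeq_ne_zero h hm) (by rw [mul_comm]; exact gammaSeq_mul_poch h m)

lemma G_tendsto_one {a b c : ℂ} (hre : 0 < (c - a - b).re)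
    (hc : ∀ m : ℕ, c ≠ -(m : ℂ)) (hca : ∀ m : ℕ, c - a ≠ -(m : ℂ))
    (hcb : ∀ m : ℕ, c - b ≠ -(m : ℂ)) :
    Tendsto (fun n : ℕ => Complex.Gamma (c + n - a) * Complex.Gamma (c + n - b) /
      (Complex.Gamma (c + n) * Complex.Gamma (c + n - a - b))) atTop (𝓝 1) := by
  have hcab : ∀ m : ℕ, c - a - b ≠ -(m : ℂ) := by
    intro m h
    have := congrArg Complex.re h
    simp only [Complex.neg_re, Complex.natCast_re] at this
    have h2 : (0:ℝ) ≤ (m:ℝ) := Nat.cast_nonneg m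
    linarith
  have hΓc := Complex.Gamma_ne_zero hc
  have hΓca := Complex.Gamma_ne_zero hca
  have hΓcb := Complex.Gamma_ne_zero hcb
  have hΓcab := Complex.Gamma_ne_zero hcab
  set K : ℂ := Complex.Gamma (c-a) * Complex.Gamma (c-b) / (Complex.Gamma c * Complex.Gamma (c-a-b)) with hK
  have hGrw : ∀ n : ℕ, Complex.Gamma (c + n - a) * Complex.Gamma (c + n - b) /
      (Complex.Gamma (c + n) * Complex.Gamma (c + n - a - b)) =
      poch (c-a) n * poch (c-b) n / (poch c n * poch (c-a-b) n) * K := by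
    intro n
    rw [show c + (n:ℂ) - a - b = (c-a-b) + n by ring, show c + (n:ℂ) - a = (c-a) + n by ring,
      show c + (n:ℂ) - b = (c-b) + n by ring,
      Gamma_add_nat hc, Gamma_add_nat hca, Gamma_add_nat hcb, Gamma_add_nat hcab, hK]
    rw [div_mul_div_comm]; ring_nf
  have key : ∀ m : ℕ, 1 ≤ m →
      poch (c-a) (m+1) * poch (c-b) (m+1) / (poch c (m+1) * poch (c-a-b) (m+1)) =
      Complex.GammaSeq c m * Complex.GammaSeq (c-a-b) m /
        (Complex.GammaSeq (c-a) m * Complex.GammaSeq (c-b) m) := by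
    intro m hm
    have hm0 : (m:ℂ) ≠ 0 := Nat.cast_ne_zero.mpr (by omega)
    have hx : (m:ℂ)^(c-a) * (m:ℂ)^(c-b) = (m:ℂ)^c * (m:ℂ)^(c-a-b) := by
      rw [← cpow_add _ _ hm0, ← cpow_add _ _ hm0]; congr 1; ring
    have hX : ((m:ℂ)^(c-a) * (m.factorial:ℂ)) * ((m:ℂ)^(c-b) * (m.factorial:ℂ)) =
        ((m:ℂ)^c * (m.factorial:ℂ)) * ((m:ℂ)^(c-a-b) * (m.factorial:ℂ)) := by
      linear_combination ((m.factorial:ℂ))^2 * hx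
    have hGc := gammaSeq_ne_zero hc hm
    have hGca := gammaSeq_ne_zero hca hm
    have hGcb := gammaSeq_ne_zero hcb hm
    have hGcab := gammaSeq_ne_zero hcab hm
    have hXc := cpowfac_ne_zero c hm
    have hXca := cpowfac_ne_zero (c-a) hm
    have hXcb := cpowfac_ne_zero (c-b) hm
    have hXcab := cpowfac_ne_zero (c-a-b) hm
    rw [poch_eq hc hm, poch_eq hca hm, poch_eq hcb hm, poch_eq hcab hm]
    rw [div_mul_div_comm, div_mul_div_comm, hX]
    field_simp
    exact div_self (mul_ne_zero hXc (left_ne_zero_of_mul hXcab))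
  have hval : Complex.Gamma c * Complex.Gamma (c-a-b) /
      (Complex.Gamma (c-a) * Complex.Gamma (c-b)) * K = 1 := by
    rw [hK]; field_simp
  have hR : Tendsto (fun m : ℕ => Complex.GammaSeq c m * Complex.GammaSeq (c-a-b) m /
      (Complex.GammaSeq (c-a) m * Complex.GammaSeq (c-b) m) * K) atTop (𝓝 1) := by
    rw [← hval]
    exact (((Complex.GammaSeq_tendsto_Gamma c).mul
      (Complex.GammaSeq_tendsto_Gamma (c-a-b))).div
      ((Complex.GammaSeq_tendsto_Gamma (c-a)).mul
        (Complex.GammaSeq_tendsto_Gamma (c-b))) (mul_ne_zero hΓca hΓcb)).mul_const K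
  have hG1 : Tendsto (fun m : ℕ => Complex.Gamma (c + (m+1:ℕ) - a) * Complex.Gamma (c + (m+1:ℕ) - b) /
      (Complex.Gamma (c + (m+1:ℕ)) * Complex.Gamma (c + (m+1:ℕ) - a - b))) atTop (𝓝 1) := by
    apply hR.congr'
    filter_upwards [eventually_ge_atTop 1] with m hm
    rw [hGrw (m+1), key m hm]
  exact (tendsto_add_atTop_iff_nat 1).mp hG1

lemma poch_ne_zero' {s : ℂ} (h : ∀ i : ℕ, s + i ≠ 0) (k : ℕ) : poch s k ≠ 0 := by
  rw [poch, Finset.prod_ne_zero_iff]; exact fun i _ => h i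

/-- The hypergeometric term. -/
noncomputable def hterm (a b c : ℂ) (n k : ℕ) : ℂ :=
  poch a k * poch b k / (poch (c + n) k * (k.factorial : ℂ))

lemma hterm_zero (a b c : ℂ) (n : ℕ) : hterm a b c n 0 = 1 := by
  simp [hterm, poch_zero]

lemma hterm_succ (a b c : ℂ) (n k : ℕ) (hP : poch (c + n) k ≠ 0)
    (hcnk : c + (n:ℂ) + (k:ℂ) ≠ 0) :
    hterm a b c n (k+1) = hterm a b c n k *
      ((a + k) * (b + k) / ((c + (n:ℂ) + (k:ℂ)) * ((k:ℂ)+1))) := by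
  have hf : ((k.factorial : ℕ) : ℂ) ≠ 0 := Nat.cast_ne_zero.mpr k.factorial_ne_zero
  have hk1 : ((k:ℂ)+1) ≠ 0 := by
    have := Nat.cast_add_one_ne_zero (R := ℂ) k
    exact_mod_cast this
  simp only [hterm, poch_succ, Nat.factorial_succ]
  push_cast
  field_simp

lemma hterm_split (a b c : ℂ) (n k : ℕ) :
    hterm a b c n k = (poch a k * poch b k / ((k.factorial : ℕ) : ℂ)) * (poch (c + n) k)⁻¹ := by
  simp only [hterm, div_eq_mul_inv, mul_inv]; ring

lemma S_tendsto_one (a b c : ℂ) :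
    Tendsto (fun n : ℕ => ∑' k : ℕ, hterm a b c n k) atTop (𝓝 1) := by
  set A : ℝ := ‖a‖ + 1 with hA
  set B : ℝ := ‖b‖ + 1 with hB
  set Q : ℝ := 3*A*B + 3*A + 3*B + 3 with hQ
  have hA1 : (1:ℝ) ≤ A := by rw [hA]; linarith [norm_nonneg a]
  have hB1 : (1:ℝ) ≤ B := by rw [hB]; linarith [norm_nonneg b]
  have hQ1 : (1:ℝ) ≤ Q := by nlinarith
  set N : ℕ := ⌈‖c‖ + Q⌉₊ with hN
  set bound : ℕ → ℝ := fun k => 2 / (((k:ℝ)+1)*((k:ℝ)+2)) with hbound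
  -- summability
  have hsum : Summable bound := by
    have h1 : Summable (fun k : ℕ => 1/((k:ℝ)+1)^2) := by
      have h0 : Summable (fun n : ℕ => 1/(n:ℝ)^2) :=
        Real.summable_one_div_nat_pow.mpr one_lt_two
      have := (summable_nat_add_iff 1).mpr h0
      apply this.congr
      intro k; push_cast; ring
    apply Summable.of_nonneg_of_le (fun k => by positivity) (fun k => ?_) (h1.mul_left 2)
    have hk : (0:ℝ) ≤ (k:ℝ) := Nat.cast_nonneg k
    rw [hbound, mul_one_div]
    exact div_le_div_of_nonneg_left (by norm_num) (by positivity) (by nlinarith)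
  -- pointwise limits
  have hfac : ∀ i : ℕ, Tendsto (fun n : ℕ => (c + (n:ℂ) + (i:ℂ))⁻¹) atTop (𝓝 0) := by
    intro i
    have hnorm : Tendsto (fun n : ℕ => ‖c + (n:ℂ) + (i:ℂ)‖) atTop atTop := by
      apply tendsto_atTop_mono ?_
        (tendsto_atTop_add_const_right atTop (-‖c + (i:ℂ)‖) tendsto_natCast_atTop_atTop)
      intro n
      calc (n:ℝ) + -‖c+(i:ℂ)‖ = ‖((n:ℕ):ℂ)‖ - ‖-(c+(i:ℂ))‖ := by
            rw [Complex.norm_natCast, norm_neg]; ring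
        _ ≤ ‖((n:ℕ):ℂ) - -(c+(i:ℂ))‖ := norm_sub_norm_le _ _
        _ = ‖c + (n:ℂ) + (i:ℂ)‖ := by congr 1; ring
    rw [tendsto_zero_iff_norm_tendsto_zero]
    simp only [norm_inv]
    exact hnorm.inv_tendsto_atTop
  have hab : ∀ k : ℕ, Tendsto (fun n : ℕ => hterm a b c n k) atTop
      (𝓝 (if k = 0 then (1:ℂ) else 0)) := by
    intro k
    match k with
    | 0 =>
      simp only [if_pos rfl, hterm_zero]
      exact tendsto_const_nhds
    | (j+1) =>
      simp only [if_neg (Nat.succ_ne_zero j)]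
      have hpoch_inv : ∀ n : ℕ, (poch (c + (n:ℕ)) (j+1))⁻¹ =
          ∏ i ∈ Finset.range (j+1), (c + (n:ℂ) + (i:ℂ))⁻¹ := by
        intro n; rw [poch]; exact (Finset.prod_inv_distrib _).symm
      have hprod : Tendsto (fun n : ℕ => (poch (c + (n:ℕ)) (j+1))⁻¹) atTop (𝓝 0) := by
        have h0 := tendsto_finset_prod (f := fun (i : ℕ) (n : ℕ) => (c + (n:ℂ) + (i:ℂ))⁻¹)
          (Finset.range (j+1)) (fun i _ => hfac i)
        rw [Finset.prod_const, zero_pow (by simp : Finset.card (Finset.range (j+1)) ≠ 0)] at h0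
        exact Tendsto.congr (fun n => (hpoch_inv n).symm) h0
      have := hprod.const_mul (poch a (j+1) * poch b (j+1) / (((j+1).factorial : ℕ) : ℂ))
      rw [mul_zero] at this
      exact Tendsto.congr (fun n => (hterm_split a b c n (j+1)).symm) this
  -- the uniform bound
  have h_bound : ∀ᶠ n in atTop, ∀ k, ‖hterm a b c n k‖ ≤ bound k := by
    filter_upwards [eventually_ge_atTop N] with n hn
    have hnQ : ‖c‖ + Q ≤ (n:ℝ) := le_trans (Nat.le_ceil _) (Nat.cast_le.mpr hn)
    have hcni : ∀ i : ℕ, Q + (i:ℝ) ≤ ‖c + (n:ℂ) + (i:ℂ)‖ := by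
      intro i
      have hi : (0:ℝ) ≤ (i:ℝ) := Nat.cast_nonneg i
      calc Q + (i:ℝ) ≤ ((n:ℝ) + i) - ‖c‖ := by linarith
        _ = ‖((n:ℂ) + (i:ℂ))‖ - ‖-c‖ := by
            rw [norm_neg]
            congr 1
            rw [show ((n:ℂ) + (i:ℂ)) = (((n + i : ℕ)):ℂ) by push_cast; ring,
              Complex.norm_natCast]
            push_cast; ring
        _ ≤ ‖((n:ℂ) + (i:ℂ)) - -c‖ := norm_sub_norm_le _ _
        _ = ‖c + (n:ℂ) + (i:ℂ)‖ := by congr 1; ring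
    have hne : ∀ i : ℕ, c + (n:ℂ) + (i:ℂ) ≠ 0 := by
      intro i h0
      have := hcni i
      rw [h0, norm_zero] at this
      have hi : (0:ℝ) ≤ (i:ℝ) := Nat.cast_nonneg i
      linarith
    have hP : ∀ k : ℕ, poch (c + (n:ℕ)) k ≠ 0 := fun k => poch_ne_zero' hne k
    intro k
    induction k with
    | zero =>
      rw [hterm_zero, hbound, norm_one]
      norm_num
    | succ k ihk =>
      have hk : (0:ℝ) ≤ (k:ℝ) := Nat.cast_nonneg k
      have hQk : (0:ℝ) < Q + k := by linarith
      have hcnk := hcni k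
      rw [hterm_succ a b c n k (hP k) (hne k), norm_mul, norm_div, norm_mul, norm_mul]
      have hnormk1 : ‖(k:ℂ)+1‖ = (k:ℝ)+1 := by
        rw [show ((k:ℂ)+1) = (((k+1:ℕ)):ℂ) by push_cast; ring, Complex.norm_natCast]
        push_cast; ring
      have hna : ‖a + (k:ℂ)‖ ≤ A + k := by
        calc ‖a + (k:ℂ)‖ ≤ ‖a‖ + ‖(k:ℂ)‖ := norm_add_le _ _
          _ = ‖a‖ + k := by rw [Complex.norm_natCast]
          _ ≤ A + k := by rw [hA]; linarith
      have hnb : ‖b + (k:ℂ)‖ ≤ B + k := by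
        calc ‖b + (k:ℂ)‖ ≤ ‖b‖ + ‖(k:ℂ)‖ := norm_add_le _ _
          _ = ‖b‖ + k := by rw [Complex.norm_natCast]
          _ ≤ B + k := by rw [hB]; linarith
      have hfrac : ‖a + (k:ℂ)‖ * ‖b + (k:ℂ)‖ / (‖c + (n:ℂ) + (k:ℂ)‖ * ‖(k:ℂ)+1‖) ≤
          (A + k) * (B + k) / ((Q + k) * ((k:ℝ)+1)) := by
        rw [hnormk1]
        apply div_le_div₀ (by positivity)
          (mul_le_mul hna hnb (norm_nonneg _) (by positivity)) (by positivity)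
        apply mul_le_mul_of_nonneg_right hcnk (by positivity)
      have hcomb : ‖hterm a b c n k‖ *
            (‖a + (k:ℂ)‖ * ‖b + (k:ℂ)‖ / (‖c + (n:ℂ) + (k:ℂ)‖ * ‖(k:ℂ)+1‖)) ≤
          bound k * ((A + k) * (B + k) / ((Q + k) * ((k:ℝ)+1))) :=
        mul_le_mul ihk hfrac (by positivity) (by rw [hbound]; positivity)
      refine le_trans hcomb ?_
      rw [hbound]
      push_cast
      rw [div_mul_div_comm, div_le_div_iff₀ (by positivity) (by positivity)]
      have hA0 : (0:ℝ) ≤ A := by linarith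
      have hB0 : (0:ℝ) ≤ B := by linarith
      have keyfact : (A+(k:ℝ))*(B+k)*(k+3) ≤ (Q+k)*((k:ℝ)+1)^2 := by
        nlinarith [mul_nonneg (mul_nonneg hA0 hB0) (mul_nonneg hk hk),
          mul_nonneg hA0 (mul_nonneg hk hk), mul_nonneg hB0 (mul_nonneg hk hk),
          mul_nonneg (mul_nonneg hA0 hB0) hk, mul_nonneg hA0 hk, mul_nonneg hB0 hk,
          mul_nonneg hA0 hB0, mul_nonneg hk hk]
      calc 2*((A+(k:ℝ))*(B+k))*(((k:ℝ)+1+1)*((k:ℝ)+1+2))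
            = 2*((k:ℝ)+2)*((A+k)*(B+k)*(k+3)) := by ring
        _ ≤ 2*((k:ℝ)+2)*((Q+k)*((k:ℝ)+1)^2) := by
              have := mul_le_mul_of_nonneg_left keyfact (show (0:ℝ) ≤ 2*((k:ℝ)+2) by positivity)
              linarith
        _ = 2 * (((k:ℝ)+1)*((k:ℝ)+2)*((Q+(k:ℝ))*((k:ℝ)+1))) := by ring
  -- assemble
  have hmain := tendsto_tsum_of_dominated_convergence hsum hab h_bound
  have htsum : ∑' k : ℕ, (if k = 0 then (1:ℂ) else 0) = 1 := tsum_ite_eq 0 (fun _ => (1:ℂ))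
  rw [htsum] at hmain
  exact hmain


theorem gauss_sum_tendsto_one (a b c : ℂ) (hre : 0 < (c - a - b).re)
    (hc : ∀ m : ℕ, c ≠ -(m : ℂ)) (hca : ∀ m : ℕ, c - a ≠ -(m : ℂ))
    (hcb : ∀ m : ℕ, c - b ≠ -(m : ℂ)) :
    Tendsto (fun n : ℕ => ∑' k : ℕ, Fg a b c n k) atTop (nhds 1) := by
  have hG := G_tendsto_one hre hc hca hcb
  have hS := S_tendsto_one a b c
  have hFg : ∀ n : ℕ, ∑' k : ℕ, Fg a b c n k = (∑' k : ℕ, hterm a b c n k) *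
      (Complex.Gamma (c + n - a) * Complex.Gamma (c + n - b) /
        (Complex.Gamma (c + n) * Complex.Gamma (c + n - a - b))) := by
    intro n
    rw [← tsum_mul_right]
    rfl
  have hmul := hS.mul hG
  rw [one_mul] at hmul
  exact Tendsto.congr (fun n => (hFg n).symm) hmul
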